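/- Let (Ω, 𝓕, P) be a probability space, let d ≥ 1, R > 0 and M > 0, and let X : ℝ^d × Ω → ℝ be jointly measurable with: |X(y, ω)| ≤ 1 for all y and ω; E[X(y, ·)] = 0 for every y ∈ ℝ^d; and the random variables X(y, ·) and X(z, ·) independent whenever |y − z| ≥ R. Let p : ℝ^d → ℝ be measurable with 0 ≤ p(y) ≤ M for all y and ∫_{ℝ^d} p(y) dy = 1. Then E[ ( ∫_{ℝ^d} p(y) X(y, ω) dy )² ] ≤ M · vol(B(0, R)), where vol(B(0, R)) is the Lebesgue measure of the open Euclidean ball of radius R in ℝ^d. -/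

import Mathlib

open MeasureTheory ProbabilityTheory

theorem variance_bound_finite_range_dependence
    (d : ℕ) (hd : 1 ≤ d) {Ω : Type*} [MeasurableSpace Ω]
    (P : Measure Ω) [IsProbabilityMeasure P]
    (R M : ℝ) (hR : 0 < R) (hM : 0 < M)
    (X : EuclideanSpace ℝ (Fin d) × Ω → ℝ) (hXmeas : Measurable X)
    (hXbdd : ∀ y ω, |X (y, ω)| ≤ 1)
    (hXmean : ∀ y, ∫ ω, X (y, ω) ∂P = 0)
    (hXindep : ∀ y z : EuclideanSpace ℝ (Fin d), R ≤ ‖y - z‖ →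
      IndepFun (fun ω => X (y, ω)) (fun ω => X (z, ω)) P)
    (p : EuclideanSpace ℝ (Fin d) → ℝ) (hpmeas : Measurable p)
    (hp0 : ∀ y, 0 ≤ p y) (hpM : ∀ y, p y ≤ M)
    (hp1 : ∫ y, p y = 1) :
    ∫ ω, (∫ y, p y * X (y, ω)) ^ 2 ∂P ≤
      M * (volume (Metric.ball (0 : EuclideanSpace ℝ (Fin d)) R)).toReal := by
  set ν : Measure (EuclideanSpace ℝ (Fin d) × EuclideanSpace ℝ (Fin d)) :=
    (volume : Measure (EuclideanSpace ℝ (Fin d))).prod volume with hν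
  set C : ℝ := M * (volume (Metric.ball (0 : EuclideanSpace ℝ (Fin d)) R)).toReal with hC
  have hC0 : 0 ≤ C := by positivity
  -- basic measurability
  have hXω : ∀ y : EuclideanSpace ℝ (Fin d), Measurable (fun ω => X (y, ω)) :=
    fun y => hXmeas.comp' (measurable_const.prodMk measurable_id)
  have hp_int : Integrable p := by
    by_contra h
    rw [integral_undef h] at hp1; norm_num at hp1
  have hXω_int : ∀ y : EuclideanSpace ℝ (Fin d), Integrable (fun ω => X (y, ω)) P := by
    intro y
    refine (integrable_const (1:ℝ)).mono' (hXω y).aestronglyMeasurable ?_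
    filter_upwards with ω using by simpa using hXbdd y ω
  have hXX_int : ∀ y z : EuclideanSpace ℝ (Fin d),
      Integrable (fun ω => X (y, ω) * X (z, ω)) P := by
    intro y z
    refine (integrable_const (1:ℝ)).mono' ((hXω y).mul (hXω z)).aestronglyMeasurable ?_
    filter_upwards with ω
    rw [norm_mul]
    calc ‖X (y, ω)‖ * ‖X (z, ω)‖ ≤ 1 * 1 :=
          mul_le_mul (hXbdd y ω) (hXbdd z ω) (norm_nonneg _) zero_le_one
      _ = 1 := one_mul 1
  -- E[X y * X z] ≤ 1, and = 0 for distant points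
  have hEXX_le : ∀ y z : EuclideanSpace ℝ (Fin d), ∫ ω, X (y, ω) * X (z, ω) ∂P ≤ 1 := by
    intro y z
    calc ∫ ω, X (y, ω) * X (z, ω) ∂P ≤ ∫ _ω : Ω, (1:ℝ) ∂P := by
          refine integral_mono (hXX_int y z) (integrable_const 1) fun ω => ?_
          calc X (y, ω) * X (z, ω) ≤ |X (y, ω) * X (z, ω)| := le_abs_self _
            _ = |X (y, ω)| * |X (z, ω)| := abs_mul _ _
            _ ≤ 1 * 1 := mul_le_mul (hXbdd y ω) (hXbdd z ω) (abs_nonneg _) zero_le_one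
            _ = 1 := one_mul 1
      _ = 1 := by simp
  have hEXX_zero : ∀ y z : EuclideanSpace ℝ (Fin d), R ≤ ‖y - z‖ →
      ∫ ω, X (y, ω) * X (z, ω) ∂P = 0 := by
    intro y z h
    have := (hXindep y z h).integral_mul_eq_mul_integral (hXω_int y).aestronglyMeasurable (hXω_int z).aestronglyMeasurable
    calc ∫ ω, X (y, ω) * X (z, ω) ∂P
        = ∫ ω, ((fun ω => X (y, ω)) * fun ω => X (z, ω)) ω ∂P := rfl
      _ = (∫ ω, X (y, ω) ∂P) * ∫ ω, X (z, ω) ∂P := this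
      _ = 0 := by rw [hXmean y, zero_mul]
  -- the joint integrand
  set F : Ω → EuclideanSpace ℝ (Fin d) × EuclideanSpace ℝ (Fin d) → ℝ :=
    fun ω q => (p q.1 * X (q.1, ω)) * (p q.2 * X (q.2, ω)) with hF
  have hF_meas : Measurable (Function.uncurry F) := by
    apply Measurable.mul <;> apply Measurable.mul
    · exact hpmeas.comp' (measurable_fst.comp' measurable_snd)
    · exact hXmeas.comp' ((measurable_fst.comp' measurable_snd).prodMk measurable_fst)
    · exact hpmeas.comp' (measurable_snd.comp' measurable_snd)
    · exact hXmeas.comp' ((measurable_snd.comp' measurable_snd).prodMk measurable_fst)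
  have hpp_int : Integrable
      (fun q : EuclideanSpace ℝ (Fin d) × EuclideanSpace ℝ (Fin d) => p q.1 * p q.2) ν :=
    hp_int.mul_prod hp_int
  have hF_int : Integrable (Function.uncurry F) (P.prod ν) := by
    have hdom : Integrable
        (fun z : Ω × (EuclideanSpace ℝ (Fin d) × EuclideanSpace ℝ (Fin d)) =>
          p z.2.1 * p z.2.2) (P.prod ν) := by
      have := (integrable_const (1:ℝ)).mul_prod (μ := P) hpp_int
      simpa using this
    refine hdom.mono' hF_meas.aestronglyMeasurable ?_
    filter_upwards with z
    rcases z with ⟨ω, y, zz⟩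
    simp only [Function.uncurry, hF, Real.norm_eq_abs, abs_mul]
    rw [abs_of_nonneg (hp0 y), abs_of_nonneg (hp0 zz)]
    calc p y * |X (y, ω)| * (p zz * |X (zz, ω)|)
        ≤ p y * 1 * (p zz * 1) := by
          exact mul_le_mul (mul_le_mul_of_nonneg_left (hXbdd y ω) (hp0 y))
            (mul_le_mul_of_nonneg_left (hXbdd zz ω) (hp0 zz))
            (mul_nonneg (hp0 zz) (abs_nonneg _)) (mul_nonneg (hp0 y) zero_le_one)
      _ = p y * p zz := by ring
  -- square as a double integral
  have hsq : ∀ ω : Ω, (∫ y, p y * X (y, ω)) ^ 2 = ∫ q, F ω q ∂ν := by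
    intro ω
    rw [hν, integral_prod_mul (fun y => p y * X (y, ω)) (fun y => p y * X (y, ω)), sq]
  -- Fubini
  have hswap : ∫ ω, ∫ q, F ω q ∂ν ∂P = ∫ q, ∫ ω, F ω q ∂P ∂ν :=
    integral_integral_swap hF_int
  -- inner integral and its bound
  set G : EuclideanSpace ℝ (Fin d) × EuclideanSpace ℝ (Fin d) → ℝ :=
    fun q => ∫ ω, F ω q ∂P with hG
  have hG_int : Integrable G ν := hF_int.integral_prod_right
  have hG_eq : ∀ q : EuclideanSpace ℝ (Fin d) × EuclideanSpace ℝ (Fin d),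
      G q = p q.1 * p q.2 * ∫ ω, X (q.1, ω) * X (q.2, ω) ∂P := by
    intro q
    rw [hG]
    simp only [hF]
    rw [← integral_const_mul]
    congr 1 with ω
    ring
  set B : EuclideanSpace ℝ (Fin d) × EuclideanSpace ℝ (Fin d) → ℝ :=
    fun q => if dist q.1 q.2 < R then p q.1 * p q.2 else 0 with hB
  have hB_meas : Measurable B := by
    refine Measurable.ite ?_
      ((hpmeas.comp' measurable_fst).mul (hpmeas.comp' measurable_snd)) measurable_const
    exact measurableSet_lt (measurable_fst.dist measurable_snd) measurable_const
  have hB_int : Integrable B ν := by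
    refine hpp_int.mono' hB_meas.aestronglyMeasurable ?_
    filter_upwards with q
    simp only [hB, Real.norm_eq_abs]
    split_ifs
    · rw [abs_of_nonneg (mul_nonneg (hp0 q.1) (hp0 q.2))]
    · simpa using mul_nonneg (hp0 q.1) (hp0 q.2)
  have hGB : ∀ q : EuclideanSpace ℝ (Fin d) × EuclideanSpace ℝ (Fin d), G q ≤ B q := by
    intro q
    rw [hG_eq q]
    simp only [hB]
    split_ifs with h
    · calc p q.1 * p q.2 * ∫ ω, X (q.1, ω) * X (q.2, ω) ∂P
          ≤ p q.1 * p q.2 * 1 :=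
            mul_le_mul_of_nonneg_left (hEXX_le q.1 q.2) (mul_nonneg (hp0 q.1) (hp0 q.2))
        _ = p q.1 * p q.2 := mul_one _
    · rw [hEXX_zero q.1 q.2 (by rw [dist_eq_norm] at h; exact not_lt.1 h), mul_zero]
  -- the bound on ∫ B
  have hball : ∀ y : EuclideanSpace ℝ (Fin d),
      volume (Metric.ball y R) = volume (Metric.ball (0 : EuclideanSpace ℝ (Fin d)) R) :=
    fun y => Measure.addHaar_ball_center _ _ _
  have hball_fin : (volume (Metric.ball (0 : EuclideanSpace ℝ (Fin d)) R)) < ⊤ :=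
    measure_ball_lt_top
  have hinner : ∀ y : EuclideanSpace ℝ (Fin d), (∫ z, B (y, z)) ≤ p y * C := by
    intro y
    have h1 : (fun z : EuclideanSpace ℝ (Fin d) => B (y, z)) =
        (Metric.ball y R).indicator (fun z => p y * p z) := by
      funext z
      by_cases hm : z ∈ Metric.ball y R
      · rw [Set.indicator_of_mem hm]
        simp only [hB]
        rw [if_pos (by rw [dist_comm]; exact Metric.mem_ball.1 hm)]
      · rw [Set.indicator_of_notMem hm]
        simp only [hB]
        rw [if_neg (by rw [dist_comm]; exact fun hh => hm (Metric.mem_ball.2 hh))]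
    rw [h1, integral_indicator measurableSet_ball]
    have h2 : ∫ z in Metric.ball y R, p y * p z ≤ ∫ z in Metric.ball y R, p y * M := by
      refine setIntegral_mono_on ((hp_int.const_mul (p y)).restrict)
        (integrableOn_const (by rw [hball y]; exact hball_fin.ne))
        measurableSet_ball fun z _ => ?_
      exact mul_le_mul_of_nonneg_left (hpM z) (hp0 y)
    calc ∫ z in Metric.ball y R, p y * p z ≤ ∫ z in Metric.ball y R, p y * M := h2
      _ = p y * M * (volume (Metric.ball y R)).toReal := by
          rw [setIntegral_const, smul_eq_mul, mul_comm]; rfl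
      _ = p y * C := by rw [hball y, hC]; ring
  have hBinner_int : Integrable (fun y : EuclideanSpace ℝ (Fin d) => ∫ z, B (y, z)) :=
    hB_int.integral_prod_left
  have hB_bound : ∫ q, B q ∂ν ≤ C := by
    rw [hν, integral_prod _ hB_int]
    calc ∫ y, ∫ z, B (y, z) ≤ ∫ y, p y * C :=
          integral_mono hBinner_int (hp_int.mul_const C) hinner
      _ = C := by rw [integral_mul_const, hp1, one_mul]
  -- put everything together
  calc ∫ ω, (∫ y, p y * X (y, ω)) ^ 2 ∂P = ∫ ω, ∫ q, F ω q ∂ν ∂P :=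
        integral_congr_ae (Filter.Eventually.of_forall hsq)
    _ = ∫ q, G q ∂ν := hswap
    _ ≤ ∫ q, B q ∂ν := integral_mono hG_int hB_int hGB
    _ ≤ C := hB_bound
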